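/- arXiv:1912.05519 — 4 statements merged into one kernel-verified Lean document; each statement's English description precedes it below -/
import Mathlib

section
/- Let R be a commutative ring, A an R-module equipped with a Poisson-type structure with parameter q, and suppose q = s^2 for some s ∈ R. Then the R-bilinear product x⋆y := x∘y + s·[x,y] on A is associative: (x⋆y)⋆z = x⋆(y⋆z) for all x, y, z ∈ A. -/
/-- A Poisson-type structure with parameter `q` on an `R`-module `A`:
an `R`-bilinear commutative product `∘`, an `R`-bilinear alternating bracket `[,]`
satisfying the Jacobi identity, the Leibniz rule, and the associator identity
`(x∘y)∘z − x∘(y∘z) = q·[y,[x,z]]`. -/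
structure PoissonType (R : Type*) (A : Type*) [CommRing R] [AddCommGroup A]
    [Module R A] (q : R) where
  mul : A →ₗ[R] A →ₗ[R] A
  bracket : A →ₗ[R] A →ₗ[R] A
  mul_comm : ∀ x y : A, mul x y = mul y x
  bracket_alt : ∀ x : A, bracket x x = 0
  jacobi : ∀ x y z : A,
    bracket (bracket x y) z + bracket (bracket y z) x + bracket (bracket z x) y = 0
  leibniz : ∀ x y z : A,
    bracket (mul x y) z = mul (bracket x z) y + mul x (bracket y z)
  assoc_id : ∀ x y z : A,
    mul (mul x y) z - mul x (mul y z) = q • bracket y (bracket x z)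

/-- If `q = s^2` is a square, then `x⋆y := x∘y + s·[x,y]` is associative. -/
theorem star_assoc_of_sq (R : Type*) (A : Type*) [CommRing R] [AddCommGroup A]
    [Module R A] (q s : R) (hq : q = s ^ 2) (P : PoissonType R A q) :
    ∀ x y z : A,
      (fun x y : A => P.mul x y + s • P.bracket x y)
          ((fun x y : A => P.mul x y + s • P.bracket x y) x y) z =
        (fun x y : A => P.mul x y + s • P.bracket x y) x
          ((fun x y : A => P.mul x y + s • P.bracket x y) y z) := by
  subst hq
  intro x y z
  have anti : ∀ a b : A, P.bracket a b = - P.bracket b a := by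
    intro a b
    have h := P.bracket_alt (a + b)
    simp only [map_add, LinearMap.add_apply, P.bracket_alt] at h
    have h' : P.bracket a b + P.bracket b a = 0 := by
      rw [← h]; abel
    exact eq_neg_of_add_eq_zero_left h'
  have h1 := P.assoc_id x y z
  rw [anti y (P.bracket x z)] at h1
  have h2 := P.leibniz x y z
  have h3 := P.leibniz y z x
  rw [anti y x, anti z x] at h3
  simp only [map_neg, LinearMap.neg_apply] at h3
  have h4 := P.mul_comm (P.bracket x z) y
  have h5 := P.jacobi x y z
  rw [anti z x] at h5
  simp only [map_neg, LinearMap.neg_apply] at h5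
  simp only []
  simp only [map_add, LinearMap.add_apply, map_smul, LinearMap.smul_apply]
  rw [anti x (P.mul y z), anti x (P.bracket y z)]
  linear_combination (norm := module) h1 + s • h2 + s • h3 + s • h4 + (s^2) • h5
end

section
/- Let R be a commutative ring, A an R-module equipped with a Poisson-type structure (∘, [,]) with parameter q, and let λ ∈ R be a unit. Define a new bracket by ⟦x,y⟧ := λ·[x,y]. Then (∘, ⟦,⟧) is a Poisson-type structure on A with parameter q·λ^{-2}. -/
/-- Rescaling the bracket of a Poisson-type structure of parameter `q` by a unit `λ`
yields a Poisson-type structure with the same product and parameter `q·λ⁻²`. -/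
theorem rescale_bracket (R : Type*) (A : Type*) [CommRing R] [AddCommGroup A]
    [Module R A] (q : R) (P : PoissonType R A q) (l : Rˣ) :
    ∃ P' : PoissonType R A (q * ((l⁻¹ : Rˣ) : R) ^ 2),
      P'.mul = P.mul ∧
        ∀ x y : A, P'.bracket x y = (l : R) • P.bracket x y := by
  refine ⟨⟨P.mul, (l : R) • P.bracket, P.mul_comm, ?_, ?_, ?_, ?_⟩, rfl, fun x y => rfl⟩
  · intro x
    simp [P.bracket_alt]
  · intro x y z
    have := P.jacobi x y z
    simp only [LinearMap.smul_apply, map_smul, LinearMap.smul_apply]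
    rw [← smul_add, ← smul_add, ← smul_add, ← smul_add, this]
    simp
  · intro x y z
    simp [LinearMap.smul_apply, P.leibniz, map_add, smul_add]
  · intro x y z
    simp only [LinearMap.smul_apply, map_smul, P.assoc_id x y z, smul_smul]
    congr 1
    have h : ((l⁻¹ : Rˣ) : R) * (l : R) = 1 := l.inv_mul
    have : ((l⁻¹ : Rˣ) : R) ^ 2 * ((l : R) * (l : R)) = 1 := by
      rw [sq]; calc ((l⁻¹:Rˣ):R) * ((l⁻¹:Rˣ):R) * ((l:R) * (l:R))
          = (((l⁻¹:Rˣ):R) * (l:R)) * (((l⁻¹:Rˣ):R) * (l:R)) := by ring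
        _ = 1 := by rw [h]; ring
    rw [mul_assoc, this, mul_one]
end

section
/- Let R be a commutative ring, A an R-module equipped with a Poisson-type structure with parameter q = 1. Then the R-bilinear product x⋆y := x∘y + [x,y] on A is associative: (x⋆y)⋆z = x⋆(y⋆z) for all x, y, z ∈ A. -/
/-- For a Poisson-type structure with parameter `q = 1`, the product
`x⋆y := x∘y + [x,y]` is associative. -/
theorem star_assoc_of_param_one (R : Type*) (A : Type*) [CommRing R] [AddCommGroup A]
    [Module R A] (P : PoissonType R A 1) :
    ∀ x y z : A,
      (fun x y : A => P.mul x y + P.bracket x y)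
          ((fun x y : A => P.mul x y + P.bracket x y) x y) z =
        (fun x y : A => P.mul x y + P.bracket x y) x
          ((fun x y : A => P.mul x y + P.bracket x y) y z) := by

  intro x y z
  have hanti : ∀ a b : A, P.bracket a b = -P.bracket b a := by
    intro a b
    have h := P.bracket_alt (a + b)
    simp only [map_add, LinearMap.add_apply, P.bracket_alt, zero_add, add_zero] at h
    have := eq_neg_of_add_eq_zero_right h
    rw [this]
  simp only [map_add, LinearMap.add_apply]
  -- associator at q = 1
  have ha : P.mul (P.mul x y) z = P.mul x (P.mul y z) + P.bracket y (P.bracket x z) := by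
    have h := P.assoc_id x y z
    rw [one_smul] at h
    rw [← h]; abel
  -- Leibniz for b (m x y) z
  have hl1 := P.leibniz x y z
  -- b x (m y z) = m (b x y) z + m y (b x z)
  have hl2 : P.bracket x (P.mul y z)
      = P.mul (P.bracket x y) z + P.mul y (P.bracket x z) := by
    rw [hanti x (P.mul y z), P.leibniz y z x, hanti y x, hanti z x,
      map_neg, map_neg, LinearMap.neg_apply]
    abel
  have hj : P.bracket (P.bracket x y) z
      = P.bracket x (P.bracket y z) - P.bracket y (P.bracket x z) := by
    have h := P.jacobi x y z
    rw [hanti z x, map_neg, LinearMap.neg_apply, add_assoc] at h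
    rw [hanti x (P.bracket y z), hanti y (P.bracket x z),
      eq_neg_of_add_eq_zero_left h]
    abel
  rw [ha, hl1, hl2, hj, P.mul_comm (P.bracket x z) y]
  abel
end

section
/- Let R be a commutative ring and A an R-module equipped with an R-bilinear commutative associative product ∘ and an R-bilinear alternating bracket [,] satisfying the Leibniz rule [x∘y, z] = [x,z]∘y + x∘[y,z] and the two-step nilpotency relation [[x,y],z] = 0 for all x, y, z ∈ A. Then for all x, y, z, w ∈ A one has [x,z]∘[y,w] + [x,w]∘[y,z] = 0. -/
/-- Let `A` be a module over a commutative ring `R` with an `R`-bilinear commutative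
associative product `∘` and an `R`-bilinear alternating bracket `[,]` satisfying the
Leibniz rule `[x∘y,z] = [x,z]∘y + x∘[y,z]` and two-step nilpotency `[[x,y],z] = 0`.
Then `[x,z]∘[y,w] + [x,w]∘[y,z] = 0` for all `x, y, z, w`. -/
theorem nlie2_obstruction (R : Type*) (A : Type*) [CommRing R] [AddCommGroup A]
    [Module R A] (mul : A →ₗ[R] A →ₗ[R] A) (bracket : A →ₗ[R] A →ₗ[R] A)
    (hcomm : ∀ x y : A, mul x y = mul y x)
    (hassoc : ∀ x y z : A, mul (mul x y) z = mul x (mul y z))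
    (halt : ∀ x : A, bracket x x = 0)
    (hleib : ∀ x y z : A,
      bracket (mul x y) z = mul (bracket x z) y + mul x (bracket y z))
    (hnil : ∀ x y z : A, bracket (bracket x y) z = 0) :
    ∀ x y z w : A,
      mul (bracket x z) (bracket y w) + mul (bracket x w) (bracket y z) = 0 := by
  intro x y z w
  have h := hnil (mul x y) z w
  rw [hleib, map_add, LinearMap.add_apply, hleib, hleib, hnil, hnil] at h
  simpa using h
end
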